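/- For natural numbers n and k with 2 ≤ k ≤ n, B_{n,k} = -1/(k-1), where B_{n,k} = ∑_{j=1}^{n} ((-1)^j/j) · binom(n,j) · binom(k+j-2, k-1). -/

import Mathlib

open Finset

/-- `B_{n,k} = ∑_{j=1}^n ((-1)^j / j) C(n,j) C(k+j-2, k-1)`. -/
noncomputable def Bnk (n k : ℕ) : ℝ :=
  ∑ j ∈ Finset.Icc 1 n, (-1 : ℝ) ^ j / (j : ℝ) * (n.choose j : ℝ) * ((k + j - 2).choose (k - 1) : ℝ)

/-- Auxiliary alternating sum. -/
def Saux (N a b : ℕ) : ℤ :=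
  ∑ j ∈ Finset.range (N + 1), (-1) ^ j * (N.choose j : ℤ) * ((j + a).choose b : ℤ)

lemma Saux_step2 (N a b : ℕ) : Saux N (a + 1) (b + 1) = Saux N a b + Saux N a (b + 1) := by
  unfold Saux
  rw [← Finset.sum_add_distrib]
  refine Finset.sum_congr rfl fun j _ => ?_
  have h : j + (a + 1) = (j + a) + 1 := by ring
  rw [h, Nat.choose_succ_succ]
  push_cast
  ring

lemma Saux_step1 (N a b : ℕ) : Saux (N + 1) a b = Saux N a b - Saux N (a + 1) b := by
  have hB : ∑ i ∈ Finset.range (N + 1),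
      (-1 : ℤ) ^ i * (N.choose (i + 1) : ℤ) * (((i + 1) + a).choose b : ℤ)
      = (a.choose b : ℤ) - Saux N a b := by
    rw [Finset.sum_range_succ, Nat.choose_succ_self]
    simp only [Nat.cast_zero, mul_zero, zero_mul, add_zero]
    unfold Saux
    rw [Finset.sum_range_succ'
      (fun j => (-1 : ℤ) ^ j * (N.choose j : ℤ) * ((j + a).choose b : ℤ)) N]
    simp only [pow_zero, Nat.choose_zero_right, Nat.cast_one, one_mul, Nat.zero_add]
    rw [show (∑ i ∈ Finset.range N, (-1:ℤ)^(i+1) * (N.choose (i+1) : ℤ) * (((i+1)+a).choose b : ℤ))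
        = -∑ i ∈ Finset.range N, (-1:ℤ)^i * (N.choose (i+1) : ℤ) * (((i+1)+a).choose b : ℤ) from by
      rw [← Finset.sum_neg_distrib]; exact Finset.sum_congr rfl fun i _ => by ring]
    ring
  have hsplit : ∑ i ∈ Finset.range (N + 1),
      (-1 : ℤ) ^ (i+1) * (((N+1).choose (i + 1)) : ℤ) * (((i + 1) + a).choose b : ℤ)
      = -Saux N (a + 1) b
        - ∑ i ∈ Finset.range (N + 1),
            (-1 : ℤ) ^ i * (N.choose (i + 1) : ℤ) * (((i + 1) + a).choose b : ℤ) := by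
    unfold Saux
    rw [← Finset.sum_neg_distrib, ← Finset.sum_sub_distrib]
    refine Finset.sum_congr rfl fun i _ => ?_
    rw [Nat.choose_succ_succ, show i + (a + 1) = (i + 1) + a by omega]
    push_cast
    ring
  conv_lhs => rw [Saux]
  rw [Finset.sum_range_succ'
    (fun j => (-1 : ℤ) ^ j * (((N+1).choose j) : ℤ) * ((j + a).choose b : ℤ)) (N + 1)]
  rw [hsplit, hB]
  simp only [pow_zero, Nat.choose_zero_right, Nat.cast_one, one_mul, Nat.zero_add]
  ring

lemma Saux_eq_zero : ∀ b N a, b < N → Saux N a b = 0 := by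
  intro b
  induction b with
  | zero =>
    intro N a hN
    unfold Saux
    have : ∀ j ∈ Finset.range (N + 1), (-1 : ℤ) ^ j * (N.choose j : ℤ) * ((j + a).choose 0 : ℤ)
        = (-1) ^ j * (N.choose j : ℤ) := by
      intro j _; simp
    rw [Finset.sum_congr rfl this, Int.alternating_sum_range_choose, if_neg (by omega)]
  | succ b ih =>
    intro N a hN
    obtain ⟨N', rfl⟩ : ∃ N', N = N' + 1 := ⟨N - 1, by omega⟩
    rw [Saux_step1, Saux_step2, ih N' a (by omega)]
    ring

theorem Bnk_eq (n k : ℕ) (hk : 2 ≤ k) (hkn : k ≤ n) : Bnk n k = -1 / ((k : ℝ) - 1) := by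
  obtain ⟨m, rfl⟩ := Nat.exists_eq_add_of_le hk
  have hm : m < n := by omega
  have key : (Saux n m m : ℝ) = 0 := by rw [Saux_eq_zero m n m hm]; norm_num
  unfold Bnk
  have h1 : ∀ j : ℕ, 2 + m + j - 2 = m + j := fun j => by omega
  have h2 : 2 + m - 1 = m + 1 := by omega
  have step : ∀ j ∈ Finset.Icc 1 n,
      (-1 : ℝ) ^ j / (j : ℝ) * (n.choose j : ℝ) * (((2 + m) + j - 2).choose ((2 + m) - 1) : ℝ)
      = ((-1 : ℝ) ^ j * (n.choose j : ℝ) * ((j + m).choose m : ℝ)) / ((m : ℝ) + 1) := by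
    intro j hj
    rw [Finset.mem_Icc] at hj
    have hj1 : 1 ≤ j := hj.1
    rw [h1 j, h2]
    have hc : ((m + j).choose (m + 1) : ℝ) * ((m : ℝ) + 1) = ((m + j).choose m : ℝ) * (j : ℝ) := by
      have := Nat.choose_succ_right_eq (m + j) m
      have hsub : m + j - m = j := by omega
      rw [hsub] at this
      exact_mod_cast congrArg (fun x : ℕ => (x : ℝ)) this
    have hjne : (j : ℝ) ≠ 0 := by positivity
    have hmne : (m : ℝ) + 1 ≠ 0 := by positivity
    have hcomm : (j + m).choose m = (m + j).choose m := by rw [Nat.add_comm]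
    rw [hcomm]
    field_simp
    linear_combination (n.choose j : ℝ) * hc
  rw [Finset.sum_congr rfl step, ← Finset.sum_div]
  have hins : Finset.range (n + 1) = insert 0 (Finset.Icc 1 n) := by
    ext x; simp [Finset.mem_range, Finset.mem_Icc]; omega
  have hSsum : (Saux n m m : ℝ)
      = ∑ j ∈ Finset.range (n + 1), (-1 : ℝ) ^ j * (n.choose j : ℝ) * ((j + m).choose m : ℝ) := by
    unfold Saux
    push_cast
    rfl
  rw [hins, Finset.sum_insert (by simp)] at hSsum
  simp only [pow_zero, Nat.choose_zero_right, Nat.cast_one, Nat.zero_add, Nat.choose_self] at hSsum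
  have hsum : ∑ j ∈ Finset.Icc 1 n, (-1 : ℝ) ^ j * (n.choose j : ℝ) * ((j + m).choose m : ℝ) = -1 := by
    have := hSsum
    rw [key] at this
    linarith [this]
  rw [hsum]
  push_cast
  rw [show (2 : ℝ) + (m : ℝ) - 1 = (m : ℝ) + 1 by ring]
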